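/- For every p ≥ 1, (1/π) ∫_{-6/√5}^{6/√5} (sin²t / t²)^p dt ≤ √(3/π) / √p. -/

import Mathlib

open MeasureTheory Real

/-- `(sin t / t)^2`, extended continuously by `1` at `t = 0`. -/
noncomputable def sinc2 (t : ℝ) : ℝ := if t = 0 then 1 else Real.sin t ^ 2 / t ^ 2

private lemma nonneg_of_hasDerivAt {f f' : ℝ → ℝ} (hf : ∀ x, HasDerivAt f (f' x) x)
    (h0 : f 0 = 0) (hd : ∀ x, 0 ≤ x → 0 ≤ f' x) {x : ℝ} (hx : 0 ≤ x) : 0 ≤ f x := by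
  have hcont : Continuous f := by
    rw [continuous_iff_continuousAt]; exact fun y => (hf y).continuousAt
  have hmono : MonotoneOn f (Set.Ici 0) := by
    apply monotoneOn_of_deriv_nonneg (convex_Ici 0) hcont.continuousOn
    · intro y hy; exact (hf y).differentiableAt.differentiableWithinAt
    · intro y hy
      rw [(hf y).deriv]
      exact hd y (le_of_lt (by simpa using hy))
  calc (0:ℝ) = f 0 := h0.symm
    _ ≤ f x := hmono (by simp) (by simpa using hx) hx

private lemma sin_cubic_lb {t : ℝ} (ht : 0 ≤ t) : t - t^3/6 ≤ Real.sin t := by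
  have h := nonneg_of_hasDerivAt (f := fun t => Real.sin t - (t - t^3/6))
    (f' := fun t => Real.cos t - (1 - t^2/2)) (fun x => by
      have h1 : HasDerivAt (fun t : ℝ => t - t^3/6) (1 - 3*x^2/6) x := by
        have := ((hasDerivAt_id x).sub (((hasDerivAt_pow 3 x)).div_const 6))
        exact this.congr_deriv (by norm_num <;> ring)
      have := (Real.hasDerivAt_sin x).sub h1
      exact this.congr_deriv (by ring))
    (by simp) (fun x hx => by
      have := Real.one_sub_sq_div_two_le_cos (x := x); linarith) ht
  linarith

private lemma cos_quartic_ub {t : ℝ} (ht : 0 ≤ t) : Real.cos t ≤ 1 - t^2/2 + t^4/24 := by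
  have h := nonneg_of_hasDerivAt (f := fun t => (1 - t^2/2 + t^4/24) - Real.cos t)
    (f' := fun t => (Real.sin t - (t - t^3/6))) (fun x => by
      have h1 : HasDerivAt (fun t : ℝ => 1 - t^2/2 + t^4/24) (-(2*x)/2 + 4*x^3/24) x := by
        have := (((hasDerivAt_const x (1:ℝ)).sub ((hasDerivAt_pow 2 x).div_const 2)).add
          ((hasDerivAt_pow 4 x).div_const 24))
        exact this.congr_deriv (by norm_num <;> ring)
      have := h1.sub (Real.hasDerivAt_cos x)
      exact this.congr_deriv (by ring))
    (by norm_num) (fun x hx => by have := sin_cubic_lb hx; linarith) ht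
  linarith

private lemma sin_quintic_ub {t : ℝ} (ht : 0 ≤ t) :
    Real.sin t ≤ t - t^3/6 + t^5/120 := by
  have h := nonneg_of_hasDerivAt (f := fun t => (t - t^3/6 + t^5/120) - Real.sin t)
    (f' := fun t => (1 - t^2/2 + t^4/24) - Real.cos t) (fun x => by
      have h1 : HasDerivAt (fun t : ℝ => t - t^3/6 + t^5/120) (1 - 3*x^2/6 + 5*x^4/120) x := by
        have := (((hasDerivAt_id x).sub ((hasDerivAt_pow 3 x).div_const 6)).add
          ((hasDerivAt_pow 5 x).div_const 120))
        exact this.congr_deriv (by norm_num <;> ring)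
      have := h1.sub (Real.hasDerivAt_sin x)
      exact this.congr_deriv (by ring))
    (by norm_num) (fun x hx => by have := cos_quartic_ub hx; linarith) ht
  linarith

private lemma exp_quad_ub {x : ℝ} (hx : 0 ≤ x) : Real.exp (-x) ≤ 1 - x + x^2/2 := by
  have h := nonneg_of_hasDerivAt (f := fun x => (1 - x + x^2/2) - Real.exp (-x))
    (f' := fun x => (-1 + x) + Real.exp (-x)) (fun y => by
      have h1 : HasDerivAt (fun x : ℝ => 1 - x + x^2/2) (-1 + 2*y/2) y := by
        have := (((hasDerivAt_const y (1:ℝ)).sub (hasDerivAt_id y)).add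
          ((hasDerivAt_pow 2 y).div_const 2))
        exact this.congr_deriv (by norm_num <;> ring)
      have h2 : HasDerivAt (fun x : ℝ => Real.exp (-x)) (Real.exp (-y) * (-1)) y :=
        (hasDerivAt_neg y).exp
      have := h1.sub h2
      exact this.congr_deriv (by ring))
    (by norm_num) (fun y hy => by
      have := Real.add_one_le_exp (-y); linarith) hx
  linarith

private lemma exp_cubic_lb {x : ℝ} (hx : 0 ≤ x) :
    1 - x + x^2/2 - x^3/6 ≤ Real.exp (-x) := by
  have h := nonneg_of_hasDerivAt (f := fun x => Real.exp (-x) - (1 - x + x^2/2 - x^3/6))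
    (f' := fun x => (1 - x + x^2/2) - Real.exp (-x)) (fun y => by
      have h1 : HasDerivAt (fun x : ℝ => 1 - x + x^2/2 - x^3/6)
          (-1 + 2*y/2 - 3*y^2/6) y := by
        have := ((((hasDerivAt_const y (1:ℝ)).sub (hasDerivAt_id y)).add
          ((hasDerivAt_pow 2 y).div_const 2)).sub ((hasDerivAt_pow 3 y).div_const 6))
        exact this.congr_deriv (by norm_num <;> ring)
      have h2 : HasDerivAt (fun x : ℝ => Real.exp (-x)) (Real.exp (-y) * (-1)) y :=
        (hasDerivAt_neg y).exp
      have := h2.sub h1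
      exact this.congr_deriv (by ring))
    (by norm_num) (fun y hy => by have := exp_quad_ub hy; linarith) hx
  linarith

private lemma sinc2_nonneg (t : ℝ) : 0 ≤ sinc2 t := by
  unfold sinc2; split
  · norm_num
  · positivity

private lemma sinc2_le_exp {t : ℝ} (ht : t^2 ≤ 36/5) : sinc2 t ≤ Real.exp (-(t^2/3)) := by
  unfold sinc2
  split
  · rename_i h; subst h; norm_num
  · rename_i hne
    set s := |t| with hs
    have hspos : 0 < s := abs_pos.mpr hne
    have hs2 : s^2 = t^2 := sq_abs t
    have hsin2 : Real.sin t ^ 2 = Real.sin s ^ 2 := by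
      rcases abs_choice t with h | h
      · rw [hs, h]
      · rw [hs, h, Real.sin_neg]; ring
    rw [hsin2, ← hs2]
    have hs36 : s^2 ≤ 36/5 := by rw [hs2]; exact ht
    have hs3 : s ≤ 3 := by nlinarith
    have hsin_nonneg : 0 ≤ Real.sin s := by
      apply Real.sin_nonneg_of_nonneg_of_le_pi hspos.le
      linarith [Real.pi_gt_three]
    have hub : Real.sin s ≤ s * (1 - s^2/6 + s^4/120) := by
      have := sin_quintic_ub hspos.le
      nlinarith
    have hPexp : 1 - s^2/6 + s^4/120 ≤ Real.exp (-(s^2/6)) := by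
      have hx : (0:ℝ) ≤ s^2/6 := by positivity
      have h1 := exp_cubic_lb hx
      have h6 : s^6 ≤ s^4 * (36/5) := by nlinarith [pow_nonneg hspos.le 4]
      nlinarith
    have hle : Real.sin s ≤ s * Real.exp (-(s^2/6)) := by
      have : s * (1 - s^2/6 + s^4/120) ≤ s * Real.exp (-(s^2/6)) :=
        mul_le_mul_of_nonneg_left hPexp hspos.le
      linarith
    have hsq : Real.sin s ^ 2 ≤ (s * Real.exp (-(s^2/6)))^2 :=
      pow_le_pow_left₀ hsin_nonneg hle 2
    have hexp2 : (s * Real.exp (-(s^2/6)))^2 = s^2 * Real.exp (-(s^2/3)) := by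
      have he : Real.exp (-(s^2/6)) ^ 2 = Real.exp (-(s^2/3)) := by
        rw [sq, ← Real.exp_add]; congr 1; ring
      rw [mul_pow, he]
    rw [div_le_iff₀ (by positivity : (0:ℝ) < s^2)]
    rw [hexp2] at hsq
    linarith [hsq]

theorem ball_central_estimate (p : ℝ) (hp : 1 ≤ p) :
    (1 / π) * ∫ t in (-(6 / Real.sqrt 5))..(6 / Real.sqrt 5), sinc2 t ^ p ≤
      Real.sqrt (3 / π) / Real.sqrt p := by
  set a : ℝ := 6 / Real.sqrt 5 with ha
  have hppos : 0 < p := lt_of_lt_of_le one_pos hp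
  have h5 : (0:ℝ) < Real.sqrt 5 := Real.sqrt_pos.mpr (by norm_num)
  have hapos : 0 < a := by positivity
  have ha2 : a^2 = 36/5 := by
    rw [ha, div_pow, Real.sq_sqrt (by norm_num : (0:ℝ) ≤ 5)]; norm_num
  set g : ℝ → ℝ := fun t => Real.exp (-(p/3) * t^2) with hg
  have hgint : Integrable g := integrable_exp_neg_mul_sq (by positivity)
  -- pointwise bound with rpow
  have hpt : ∀ t ∈ Set.Ioc (-a) a, sinc2 t ^ p ≤ g t := by
    intro t ht
    have ht2 : t^2 ≤ 36/5 := by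
      rw [← ha2]
      have h1 : -a ≤ t := le_of_lt ht.1
      have h2 : t ≤ a := ht.2
      nlinarith
    have h1 : sinc2 t ^ p ≤ Real.exp (-(t^2/3)) ^ p :=
      Real.rpow_le_rpow (sinc2_nonneg t) (sinc2_le_exp ht2) hppos.le
    have h2 : Real.exp (-(t^2/3)) ^ p = g t := by
      rw [hg, Real.rpow_def_of_pos (Real.exp_pos _), Real.log_exp]
      ring_nf
    rw [← h2]; exact h1
  -- measurability
  have hmeas : Measurable fun t => sinc2 t ^ p := by
    have hm : Measurable sinc2 := by
      unfold sinc2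
      exact Measurable.ite (measurableSet_singleton 0) measurable_const
        ((Real.measurable_sin.pow_const 2).div (measurable_id.pow_const 2))
    exact (Real.continuous_rpow_const hppos.le).measurable.comp hm
  have hfint : IntegrableOn (fun t => sinc2 t ^ p) (Set.Ioc (-a) a) := by
    refine hgint.integrableOn.mono' hmeas.aestronglyMeasurable ?_
    refine (ae_restrict_iff' measurableSet_Ioc).2 (Filter.Eventually.of_forall ?_)
    intro t ht
    rw [Real.norm_eq_abs, abs_of_nonneg (Real.rpow_nonneg (sinc2_nonneg t) p)]
    exact hpt t ht
  have hstep1 : ∫ t in (-a)..a, sinc2 t ^ p = ∫ t in Set.Ioc (-a) a, sinc2 t ^ p := by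
    rw [intervalIntegral.integral_of_le (by linarith)]
  have hstep2 : ∫ t in Set.Ioc (-a) a, sinc2 t ^ p ≤ ∫ t in Set.Ioc (-a) a, g t :=
    setIntegral_mono_on hfint hgint.integrableOn measurableSet_Ioc hpt
  have hstep3 : ∫ t in Set.Ioc (-a) a, g t ≤ ∫ t, g t :=
    setIntegral_le_integral hgint
      (Filter.Eventually.of_forall fun t => (Real.exp_pos _).le)
  have hstep4 : ∫ t, g t = Real.sqrt (π / (p/3)) := integral_gaussian (p/3)
  have hval : Real.sqrt (π / (p/3)) = π * (Real.sqrt (3/π) / Real.sqrt p) := by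
    have hpi := Real.pi_pos
    have h1 : π / (p/3) = π^2 * ((3/π) / p) := by
      field_simp
    rw [h1, Real.sqrt_mul (sq_nonneg π), Real.sqrt_sq hpi.le,
      Real.sqrt_div (by positivity : (0:ℝ) ≤ 3/π)]
  have hpi := Real.pi_pos
  have hfinal : ∫ t in (-a)..a, sinc2 t ^ p ≤ π * (Real.sqrt (3/π) / Real.sqrt p) := by
    rw [hstep1, ← hval, ← hstep4]
    exact le_trans hstep2 hstep3
  calc (1/π) * ∫ t in (-a)..a, sinc2 t ^ p
      ≤ (1/π) * (π * (Real.sqrt (3/π) / Real.sqrt p)) := by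
        apply mul_le_mul_of_nonneg_left hfinal (by positivity)
    _ = Real.sqrt (3/π) / Real.sqrt p := by field_simp
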